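/- In g_ω, consider r = a₂ J∧K₁ + b₂ J∧K₂ + c₂ K₁∧K₂ + a₆ (−J∧P₀ + P₁∧K₂ + K₁∧P₂) with real parameters a₂, b₂, c₂, a₆. Then the Schouten bracket [[r,r]] ∈ g_ω⊗g_ω⊗g_ω is an invariant element, i.e. (ad_X⊗id⊗id + id⊗ad_X⊗id + id⊗id⊗ad_X)([[r,r]]) = 0 for all X ∈ g_ω, if and only if a₂² + b₂² − c₂² − 4ω a₆² = 0 (equivalently a₂² + b₂² − c₂² + 4Λ a₆² = 0 with Λ = −ω). In other words, r is a solution of the modified classical Yang–Baxter equation exactly under this constraint. -/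

import Mathlib

set_option maxHeartbeats 1600000
set_option maxRecDepth 8000


open TensorProduct

noncomputable def alt3 {g : Type*} [AddCommGroup g] [Module ℝ g] (x y z : g) :
    TensorProduct ℝ g (TensorProduct ℝ g g) :=
  x ⊗ₜ[ℝ] (y ⊗ₜ[ℝ] z) - x ⊗ₜ[ℝ] (z ⊗ₜ[ℝ] y) - y ⊗ₜ[ℝ] (x ⊗ₜ[ℝ] z)
    + y ⊗ₜ[ℝ] (z ⊗ₜ[ℝ] x) + z ⊗ₜ[ℝ] (x ⊗ₜ[ℝ] y) - z ⊗ₜ[ℝ] (y ⊗ₜ[ℝ] x)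


/-- `x ∧ y = x ⊗ y − y ⊗ x`. -/
noncomputable def wedge {g : Type*} [AddCommGroup g] [Module ℝ g] (x y : g) :
    TensorProduct ℝ g g := x ⊗ₜ[ℝ] y - y ⊗ₜ[ℝ] x

/-- In `g_ω`, the element
`r = a₂ J∧K₁ + b₂ J∧K₂ + c₂ K₁∧K₂ + a₆(−J∧P₀ + P₁∧K₂ + K₁∧P₂)` has ad-invariant
Schouten bracket `[[r,r]]` (i.e. solves the modified classical Yang–Baxter equation)
if and only if `a₂² + b₂² − c₂² − 4ω a₆² = 0`. -/
theorem mCYBE_condition_g_omega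
    (ω : ℝ) (g : Type*) [LieRing g] [LieAlgebra ℝ g]
    (J P0 P1 P2 K1 K2 : g)
    (hind : LinearIndependent ℝ ![J, P0, P1, P2, K1, K2])
    (hspan : Submodule.span ℝ (Set.range ![J, P0, P1, P2, K1, K2]) = ⊤)
    (hJP1 : ⁅J, P1⁆ = P2) (hJP2 : ⁅J, P2⁆ = -P1)
    (hJK1 : ⁅J, K1⁆ = K2) (hJK2 : ⁅J, K2⁆ = -K1) (hJP0 : ⁅J, P0⁆ = 0)
    (hP1K1 : ⁅P1, K1⁆ = -P0) (hP2K2 : ⁅P2, K2⁆ = -P0)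
    (hP1K2 : ⁅P1, K2⁆ = 0) (hP2K1 : ⁅P2, K1⁆ = 0)
    (hP0K1 : ⁅P0, K1⁆ = -P1) (hP0K2 : ⁅P0, K2⁆ = -P2)
    (hK1K2 : ⁅K1, K2⁆ = -J)
    (hP0P1 : ⁅P0, P1⁆ = ω • K1) (hP0P2 : ⁅P0, P2⁆ = ω • K2)
    (hP1P2 : ⁅P1, P2⁆ = -(ω • J))
    -- the Schouten bracket, as a bilinear map determined by its values on pure tensors
    (S : TensorProduct ℝ g g →ₗ[ℝ] TensorProduct ℝ g g →ₗ[ℝ]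
      TensorProduct ℝ g (TensorProduct ℝ g g))
    (hS : ∀ u v u' v' : g,
      S (u ⊗ₜ[ℝ] v) (u' ⊗ₜ[ℝ] v') =
        ⁅u, u'⁆ ⊗ₜ[ℝ] (v ⊗ₜ[ℝ] v') + u ⊗ₜ[ℝ] (⁅v, u'⁆ ⊗ₜ[ℝ] v')
          + u ⊗ₜ[ℝ] (u' ⊗ₜ[ℝ] ⁅v, v'⁆))
    (a2 b2 c2 a6 : ℝ)
    (r : TensorProduct ℝ g g)
    (hr : r = a2 • wedge J K1 + b2 • wedge J K2 + c2 • wedge K1 K2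
      + a6 • (-(wedge J P0) + wedge P1 K2 + wedge K1 P2)) :
    ((∀ X : g,
      (TensorProduct.map (LieAlgebra.ad ℝ g X : g →ₗ[ℝ] g)
          (LinearMap.id : TensorProduct ℝ g g →ₗ[ℝ] TensorProduct ℝ g g)
        + TensorProduct.map (LinearMap.id : g →ₗ[ℝ] g)
          (TensorProduct.map (LieAlgebra.ad ℝ g X : g →ₗ[ℝ] g) (LinearMap.id : g →ₗ[ℝ] g))
        + TensorProduct.map (LinearMap.id : g →ₗ[ℝ] g)
          (TensorProduct.map (LinearMap.id : g →ₗ[ℝ] g) (LieAlgebra.ad ℝ g X : g →ₗ[ℝ] g)))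
        (S r r) = 0)
      ↔ a2 ^ 2 + b2 ^ 2 - c2 ^ 2 - 4 * ω * a6 ^ 2 = 0) := by
  have hP1J : ⁅P1, J⁆ = -P2 := by rw [← lie_skew, hJP1]
  have hP2J : ⁅P2, J⁆ = P1 := by rw [← lie_skew, hJP2, neg_neg]
  have hK1J : ⁅K1, J⁆ = -K2 := by rw [← lie_skew, hJK1]
  have hK2J : ⁅K2, J⁆ = K1 := by rw [← lie_skew, hJK2, neg_neg]
  have hP0J : ⁅P0, J⁆ = 0 := by rw [← lie_skew, hJP0, neg_zero]
  have hK1P1 : ⁅K1, P1⁆ = P0 := by rw [← lie_skew, hP1K1, neg_neg]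
  have hK2P2 : ⁅K2, P2⁆ = P0 := by rw [← lie_skew, hP2K2, neg_neg]
  have hK2P1 : ⁅K2, P1⁆ = 0 := by rw [← lie_skew, hP1K2, neg_zero]
  have hK1P2 : ⁅K1, P2⁆ = 0 := by rw [← lie_skew, hP2K1, neg_zero]
  have hK1P0 : ⁅K1, P0⁆ = P1 := by rw [← lie_skew, hP0K1, neg_neg]
  have hK2P0 : ⁅K2, P0⁆ = P2 := by rw [← lie_skew, hP0K2, neg_neg]
  have hK2K1 : ⁅K2, K1⁆ = J := by rw [← lie_skew, hK1K2, neg_neg]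
  have hP1P0 : ⁅P1, P0⁆ = -(ω • K1) := by rw [← lie_skew, hP0P1]
  have hP2P0 : ⁅P2, P0⁆ = -(ω • K2) := by rw [← lie_skew, hP0P2]
  have hP2P1 : ⁅P2, P1⁆ = ω • J := by rw [← lie_skew, hP1P2, neg_neg]
  have hop : ∀ X a b c : g,
      (TensorProduct.map (LieAlgebra.ad ℝ g (X) : g →ₗ[ℝ] g)
          (LinearMap.id : TensorProduct ℝ g g →ₗ[ℝ] TensorProduct ℝ g g)
        + TensorProduct.map (LinearMap.id : g →ₗ[ℝ] g)
          (TensorProduct.map (LieAlgebra.ad ℝ g (X) : g →ₗ[ℝ] g) (LinearMap.id : g →ₗ[ℝ] g))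
        + TensorProduct.map (LinearMap.id : g →ₗ[ℝ] g)
          (TensorProduct.map (LinearMap.id : g →ₗ[ℝ] g) (LieAlgebra.ad ℝ g (X) : g →ₗ[ℝ] g)))
        (a ⊗ₜ[ℝ] (b ⊗ₜ[ℝ] c))
      = ⁅X, a⁆ ⊗ₜ[ℝ] (b ⊗ₜ[ℝ] c) + a ⊗ₜ[ℝ] (⁅X, b⁆ ⊗ₜ[ℝ] c) + a ⊗ₜ[ℝ] (b ⊗ₜ[ℝ] ⁅X, c⁆) := by
    intro X a b c
    simp [TensorProduct.map_tmul, LieAlgebra.ad_apply, LinearMap.add_apply]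
  have hT : S r r = (a2 ^ 2 + b2 ^ 2 - c2 ^ 2 - 4 * ω * a6 ^ 2) • alt3 J K1 K2 + a6 ^ 2 • (ω • alt3 J K1 K2 + alt3 J P1 P2 + alt3 P0 P1 K1 + alt3 P0 P2 K2) := by
    rw [hr]
    simp only [wedge, alt3, map_add, map_sub, map_neg, map_smul, LinearMap.add_apply, LinearMap.sub_apply, LinearMap.neg_apply, LinearMap.smul_apply, hS, hJP1, hJP2, hJK1, hJK2, hJP0, hP1K1, hP2K2, hP1K2, hP2K1, hP0K1, hP0K2, hK1K2, hP0P1, hP0P2, hP1P2, hP1J, hP2J, hK1J, hK2J, hP0J, hK1P1, hK2P2, hK2P1, hK1P2, hK1P0, hK2P0, hK2K1, hP1P0, hP2P0, hP2P1, lie_self, ← smul_tmul', tmul_smul, neg_tmul, tmul_neg, zero_tmul, tmul_zero, smul_zero, smul_neg, neg_zero, add_zero, zero_add, neg_neg]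
    module
  have hΩ : ∀ X : g, (TensorProduct.map (LieAlgebra.ad ℝ g (X) : g →ₗ[ℝ] g)
          (LinearMap.id : TensorProduct ℝ g g →ₗ[ℝ] TensorProduct ℝ g g)
        + TensorProduct.map (LinearMap.id : g →ₗ[ℝ] g)
          (TensorProduct.map (LieAlgebra.ad ℝ g (X) : g →ₗ[ℝ] g) (LinearMap.id : g →ₗ[ℝ] g))
        + TensorProduct.map (LinearMap.id : g →ₗ[ℝ] g)
          (TensorProduct.map (LinearMap.id : g →ₗ[ℝ] g) (LieAlgebra.ad ℝ g (X) : g →ₗ[ℝ] g))) (ω • alt3 J K1 K2 + alt3 J P1 P2 + alt3 P0 P1 K1 + alt3 P0 P2 K2) = 0 := by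
    have bJ : (TensorProduct.map (LieAlgebra.ad ℝ g (J) : g →ₗ[ℝ] g)
          (LinearMap.id : TensorProduct ℝ g g →ₗ[ℝ] TensorProduct ℝ g g)
        + TensorProduct.map (LinearMap.id : g →ₗ[ℝ] g)
          (TensorProduct.map (LieAlgebra.ad ℝ g (J) : g →ₗ[ℝ] g) (LinearMap.id : g →ₗ[ℝ] g))
        + TensorProduct.map (LinearMap.id : g →ₗ[ℝ] g)
          (TensorProduct.map (LinearMap.id : g →ₗ[ℝ] g) (LieAlgebra.ad ℝ g (J) : g →ₗ[ℝ] g))) (ω • alt3 J K1 K2 + alt3 J P1 P2 + alt3 P0 P1 K1 + alt3 P0 P2 K2) = 0 := by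
      simp only [alt3, map_add, map_sub, map_neg, map_smul, LinearMap.add_apply, LinearMap.sub_apply, LinearMap.neg_apply, LinearMap.smul_apply, hop, hJP1, hJP2, hJK1, hJK2, hJP0, hP1K1, hP2K2, hP1K2, hP2K1, hP0K1, hP0K2, hK1K2, hP0P1, hP0P2, hP1P2, hP1J, hP2J, hK1J, hK2J, hP0J, hK1P1, hK2P2, hK2P1, hK1P2, hK1P0, hK2P0, hK2K1, hP1P0, hP2P0, hP2P1, lie_self, ← smul_tmul', tmul_smul, neg_tmul, tmul_neg, zero_tmul, tmul_zero, smul_zero, smul_neg, neg_zero, add_zero, zero_add, neg_neg]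
      module
    have bP0 : (TensorProduct.map (LieAlgebra.ad ℝ g (P0) : g →ₗ[ℝ] g)
          (LinearMap.id : TensorProduct ℝ g g →ₗ[ℝ] TensorProduct ℝ g g)
        + TensorProduct.map (LinearMap.id : g →ₗ[ℝ] g)
          (TensorProduct.map (LieAlgebra.ad ℝ g (P0) : g →ₗ[ℝ] g) (LinearMap.id : g →ₗ[ℝ] g))
        + TensorProduct.map (LinearMap.id : g →ₗ[ℝ] g)
          (TensorProduct.map (LinearMap.id : g →ₗ[ℝ] g) (LieAlgebra.ad ℝ g (P0) : g →ₗ[ℝ] g))) (ω • alt3 J K1 K2 + alt3 J P1 P2 + alt3 P0 P1 K1 + alt3 P0 P2 K2) = 0 := by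
      simp only [alt3, map_add, map_sub, map_neg, map_smul, LinearMap.add_apply, LinearMap.sub_apply, LinearMap.neg_apply, LinearMap.smul_apply, hop, hJP1, hJP2, hJK1, hJK2, hJP0, hP1K1, hP2K2, hP1K2, hP2K1, hP0K1, hP0K2, hK1K2, hP0P1, hP0P2, hP1P2, hP1J, hP2J, hK1J, hK2J, hP0J, hK1P1, hK2P2, hK2P1, hK1P2, hK1P0, hK2P0, hK2K1, hP1P0, hP2P0, hP2P1, lie_self, ← smul_tmul', tmul_smul, neg_tmul, tmul_neg, zero_tmul, tmul_zero, smul_zero, smul_neg, neg_zero, add_zero, zero_add, neg_neg]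
      module
    have bP1 : (TensorProduct.map (LieAlgebra.ad ℝ g (P1) : g →ₗ[ℝ] g)
          (LinearMap.id : TensorProduct ℝ g g →ₗ[ℝ] TensorProduct ℝ g g)
        + TensorProduct.map (LinearMap.id : g →ₗ[ℝ] g)
          (TensorProduct.map (LieAlgebra.ad ℝ g (P1) : g →ₗ[ℝ] g) (LinearMap.id : g →ₗ[ℝ] g))
        + TensorProduct.map (LinearMap.id : g →ₗ[ℝ] g)
          (TensorProduct.map (LinearMap.id : g →ₗ[ℝ] g) (LieAlgebra.ad ℝ g (P1) : g →ₗ[ℝ] g))) (ω • alt3 J K1 K2 + alt3 J P1 P2 + alt3 P0 P1 K1 + alt3 P0 P2 K2) = 0 := by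
      simp only [alt3, map_add, map_sub, map_neg, map_smul, LinearMap.add_apply, LinearMap.sub_apply, LinearMap.neg_apply, LinearMap.smul_apply, hop, hJP1, hJP2, hJK1, hJK2, hJP0, hP1K1, hP2K2, hP1K2, hP2K1, hP0K1, hP0K2, hK1K2, hP0P1, hP0P2, hP1P2, hP1J, hP2J, hK1J, hK2J, hP0J, hK1P1, hK2P2, hK2P1, hK1P2, hK1P0, hK2P0, hK2K1, hP1P0, hP2P0, hP2P1, lie_self, ← smul_tmul', tmul_smul, neg_tmul, tmul_neg, zero_tmul, tmul_zero, smul_zero, smul_neg, neg_zero, add_zero, zero_add, neg_neg]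
      module
    have bP2 : (TensorProduct.map (LieAlgebra.ad ℝ g (P2) : g →ₗ[ℝ] g)
          (LinearMap.id : TensorProduct ℝ g g →ₗ[ℝ] TensorProduct ℝ g g)
        + TensorProduct.map (LinearMap.id : g →ₗ[ℝ] g)
          (TensorProduct.map (LieAlgebra.ad ℝ g (P2) : g →ₗ[ℝ] g) (LinearMap.id : g →ₗ[ℝ] g))
        + TensorProduct.map (LinearMap.id : g →ₗ[ℝ] g)
          (TensorProduct.map (LinearMap.id : g →ₗ[ℝ] g) (LieAlgebra.ad ℝ g (P2) : g →ₗ[ℝ] g))) (ω • alt3 J K1 K2 + alt3 J P1 P2 + alt3 P0 P1 K1 + alt3 P0 P2 K2) = 0 := by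
      simp only [alt3, map_add, map_sub, map_neg, map_smul, LinearMap.add_apply, LinearMap.sub_apply, LinearMap.neg_apply, LinearMap.smul_apply, hop, hJP1, hJP2, hJK1, hJK2, hJP0, hP1K1, hP2K2, hP1K2, hP2K1, hP0K1, hP0K2, hK1K2, hP0P1, hP0P2, hP1P2, hP1J, hP2J, hK1J, hK2J, hP0J, hK1P1, hK2P2, hK2P1, hK1P2, hK1P0, hK2P0, hK2K1, hP1P0, hP2P0, hP2P1, lie_self, ← smul_tmul', tmul_smul, neg_tmul, tmul_neg, zero_tmul, tmul_zero, smul_zero, smul_neg, neg_zero, add_zero, zero_add, neg_neg]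
      module
    have bK1 : (TensorProduct.map (LieAlgebra.ad ℝ g (K1) : g →ₗ[ℝ] g)
          (LinearMap.id : TensorProduct ℝ g g →ₗ[ℝ] TensorProduct ℝ g g)
        + TensorProduct.map (LinearMap.id : g →ₗ[ℝ] g)
          (TensorProduct.map (LieAlgebra.ad ℝ g (K1) : g →ₗ[ℝ] g) (LinearMap.id : g →ₗ[ℝ] g))
        + TensorProduct.map (LinearMap.id : g →ₗ[ℝ] g)
          (TensorProduct.map (LinearMap.id : g →ₗ[ℝ] g) (LieAlgebra.ad ℝ g (K1) : g →ₗ[ℝ] g))) (ω • alt3 J K1 K2 + alt3 J P1 P2 + alt3 P0 P1 K1 + alt3 P0 P2 K2) = 0 := by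
      simp only [alt3, map_add, map_sub, map_neg, map_smul, LinearMap.add_apply, LinearMap.sub_apply, LinearMap.neg_apply, LinearMap.smul_apply, hop, hJP1, hJP2, hJK1, hJK2, hJP0, hP1K1, hP2K2, hP1K2, hP2K1, hP0K1, hP0K2, hK1K2, hP0P1, hP0P2, hP1P2, hP1J, hP2J, hK1J, hK2J, hP0J, hK1P1, hK2P2, hK2P1, hK1P2, hK1P0, hK2P0, hK2K1, hP1P0, hP2P0, hP2P1, lie_self, ← smul_tmul', tmul_smul, neg_tmul, tmul_neg, zero_tmul, tmul_zero, smul_zero, smul_neg, neg_zero, add_zero, zero_add, neg_neg]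
      module
    have bK2 : (TensorProduct.map (LieAlgebra.ad ℝ g (K2) : g →ₗ[ℝ] g)
          (LinearMap.id : TensorProduct ℝ g g →ₗ[ℝ] TensorProduct ℝ g g)
        + TensorProduct.map (LinearMap.id : g →ₗ[ℝ] g)
          (TensorProduct.map (LieAlgebra.ad ℝ g (K2) : g →ₗ[ℝ] g) (LinearMap.id : g →ₗ[ℝ] g))
        + TensorProduct.map (LinearMap.id : g →ₗ[ℝ] g)
          (TensorProduct.map (LinearMap.id : g →ₗ[ℝ] g) (LieAlgebra.ad ℝ g (K2) : g →ₗ[ℝ] g))) (ω • alt3 J K1 K2 + alt3 J P1 P2 + alt3 P0 P1 K1 + alt3 P0 P2 K2) = 0 := by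
      simp only [alt3, map_add, map_sub, map_neg, map_smul, LinearMap.add_apply, LinearMap.sub_apply, LinearMap.neg_apply, LinearMap.smul_apply, hop, hJP1, hJP2, hJK1, hJK2, hJP0, hP1K1, hP2K2, hP1K2, hP2K1, hP0K1, hP0K2, hK1K2, hP0P1, hP0P2, hP1P2, hP1J, hP2J, hK1J, hK2J, hP0J, hK1P1, hK2P2, hK2P1, hK1P2, hK1P0, hK2P0, hK2K1, hP1P0, hP2P0, hP2P1, lie_self, ← smul_tmul', tmul_smul, neg_tmul, tmul_neg, zero_tmul, tmul_zero, smul_zero, smul_neg, neg_zero, add_zero, zero_add, neg_neg]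
      module
    have hbase : ∀ Y : g, Y ∈ Set.range ![J, P0, P1, P2, K1, K2] →
        (TensorProduct.map (LieAlgebra.ad ℝ g (Y) : g →ₗ[ℝ] g)
          (LinearMap.id : TensorProduct ℝ g g →ₗ[ℝ] TensorProduct ℝ g g)
        + TensorProduct.map (LinearMap.id : g →ₗ[ℝ] g)
          (TensorProduct.map (LieAlgebra.ad ℝ g (Y) : g →ₗ[ℝ] g) (LinearMap.id : g →ₗ[ℝ] g))
        + TensorProduct.map (LinearMap.id : g →ₗ[ℝ] g)
          (TensorProduct.map (LinearMap.id : g →ₗ[ℝ] g) (LieAlgebra.ad ℝ g (Y) : g →ₗ[ℝ] g))) (ω • alt3 J K1 K2 + alt3 J P1 P2 + alt3 P0 P1 K1 + alt3 P0 P2 K2) = 0 := by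
      rintro Y ⟨i, rfl⟩
      fin_cases i
      · exact bJ
      · exact bP0
      · exact bP1
      · exact bP2
      · exact bK1
      · exact bK2
    have hadd : ∀ x y : g, ∀ t : TensorProduct ℝ g (TensorProduct ℝ g g),
        (TensorProduct.map (LieAlgebra.ad ℝ g (x + y) : g →ₗ[ℝ] g)
          (LinearMap.id : TensorProduct ℝ g g →ₗ[ℝ] TensorProduct ℝ g g)
        + TensorProduct.map (LinearMap.id : g →ₗ[ℝ] g)
          (TensorProduct.map (LieAlgebra.ad ℝ g (x + y) : g →ₗ[ℝ] g) (LinearMap.id : g →ₗ[ℝ] g))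
        + TensorProduct.map (LinearMap.id : g →ₗ[ℝ] g)
          (TensorProduct.map (LinearMap.id : g →ₗ[ℝ] g) (LieAlgebra.ad ℝ g (x + y) : g →ₗ[ℝ] g))) t = (TensorProduct.map (LieAlgebra.ad ℝ g (x) : g →ₗ[ℝ] g)
          (LinearMap.id : TensorProduct ℝ g g →ₗ[ℝ] TensorProduct ℝ g g)
        + TensorProduct.map (LinearMap.id : g →ₗ[ℝ] g)
          (TensorProduct.map (LieAlgebra.ad ℝ g (x) : g →ₗ[ℝ] g) (LinearMap.id : g →ₗ[ℝ] g))
        + TensorProduct.map (LinearMap.id : g →ₗ[ℝ] g)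
          (TensorProduct.map (LinearMap.id : g →ₗ[ℝ] g) (LieAlgebra.ad ℝ g (x) : g →ₗ[ℝ] g))) t + (TensorProduct.map (LieAlgebra.ad ℝ g (y) : g →ₗ[ℝ] g)
          (LinearMap.id : TensorProduct ℝ g g →ₗ[ℝ] TensorProduct ℝ g g)
        + TensorProduct.map (LinearMap.id : g →ₗ[ℝ] g)
          (TensorProduct.map (LieAlgebra.ad ℝ g (y) : g →ₗ[ℝ] g) (LinearMap.id : g →ₗ[ℝ] g))
        + TensorProduct.map (LinearMap.id : g →ₗ[ℝ] g)
          (TensorProduct.map (LinearMap.id : g →ₗ[ℝ] g) (LieAlgebra.ad ℝ g (y) : g →ₗ[ℝ] g))) t := by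
      intro x y t
      rw [show (LieAlgebra.ad ℝ g (x + y) : g →ₗ[ℝ] g)
          = LieAlgebra.ad ℝ g x + LieAlgebra.ad ℝ g y from map_add (LieAlgebra.ad ℝ g) x y]
      simp only [TensorProduct.map_add_left, TensorProduct.map_add_right, LinearMap.add_apply]
      abel
    have hsmul : ∀ (c : ℝ) (x : g), ∀ t : TensorProduct ℝ g (TensorProduct ℝ g g),
        (TensorProduct.map (LieAlgebra.ad ℝ g (c • x) : g →ₗ[ℝ] g)
          (LinearMap.id : TensorProduct ℝ g g →ₗ[ℝ] TensorProduct ℝ g g)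
        + TensorProduct.map (LinearMap.id : g →ₗ[ℝ] g)
          (TensorProduct.map (LieAlgebra.ad ℝ g (c • x) : g →ₗ[ℝ] g) (LinearMap.id : g →ₗ[ℝ] g))
        + TensorProduct.map (LinearMap.id : g →ₗ[ℝ] g)
          (TensorProduct.map (LinearMap.id : g →ₗ[ℝ] g) (LieAlgebra.ad ℝ g (c • x) : g →ₗ[ℝ] g))) t = c • (TensorProduct.map (LieAlgebra.ad ℝ g (x) : g →ₗ[ℝ] g)
          (LinearMap.id : TensorProduct ℝ g g →ₗ[ℝ] TensorProduct ℝ g g)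
        + TensorProduct.map (LinearMap.id : g →ₗ[ℝ] g)
          (TensorProduct.map (LieAlgebra.ad ℝ g (x) : g →ₗ[ℝ] g) (LinearMap.id : g →ₗ[ℝ] g))
        + TensorProduct.map (LinearMap.id : g →ₗ[ℝ] g)
          (TensorProduct.map (LinearMap.id : g →ₗ[ℝ] g) (LieAlgebra.ad ℝ g (x) : g →ₗ[ℝ] g))) t := by
      intro c x t
      rw [show (LieAlgebra.ad ℝ g (c • x) : g →ₗ[ℝ] g)
          = c • (LieAlgebra.ad ℝ g x : g →ₗ[ℝ] g) from map_smul (LieAlgebra.ad ℝ g) c x]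
      simp only [TensorProduct.map_smul_left, TensorProduct.map_smul_right,
        LinearMap.add_apply, LinearMap.smul_apply, smul_add]
    have hzero : ∀ t : TensorProduct ℝ g (TensorProduct ℝ g g),
        (TensorProduct.map (LieAlgebra.ad ℝ g ((0 : g)) : g →ₗ[ℝ] g)
          (LinearMap.id : TensorProduct ℝ g g →ₗ[ℝ] TensorProduct ℝ g g)
        + TensorProduct.map (LinearMap.id : g →ₗ[ℝ] g)
          (TensorProduct.map (LieAlgebra.ad ℝ g ((0 : g)) : g →ₗ[ℝ] g) (LinearMap.id : g →ₗ[ℝ] g))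
        + TensorProduct.map (LinearMap.id : g →ₗ[ℝ] g)
          (TensorProduct.map (LinearMap.id : g →ₗ[ℝ] g) (LieAlgebra.ad ℝ g ((0 : g)) : g →ₗ[ℝ] g))) t = 0 := by
      intro t
      rw [show (LieAlgebra.ad ℝ g (0 : g) : g →ₗ[ℝ] g) = 0 from map_zero (LieAlgebra.ad ℝ g)]
      simp only [TensorProduct.map_zero_left, TensorProduct.map_zero_right,
        LinearMap.add_apply, LinearMap.zero_apply, add_zero]
    intro X
    have hX : X ∈ Submodule.span ℝ (Set.range ![J, P0, P1, P2, K1, K2]) := by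
      rw [hspan]; exact Submodule.mem_top
    induction hX using Submodule.span_induction with
    | mem x hx => exact hbase x hx
    | zero => exact hzero _
    | add x y hx hy ihx ihy => rw [hadd x y, ihx, ihy, add_zero]
    | smul c x hx ih => rw [hsmul c x, ih, smul_zero]
  constructor
  · intro h
    have h0 := h P0
    rw [hT, map_add, map_smul, map_smul, hΩ P0, smul_zero, add_zero] at h0
    have hM : (TensorProduct.map (LieAlgebra.ad ℝ g (P0) : g →ₗ[ℝ] g)
          (LinearMap.id : TensorProduct ℝ g g →ₗ[ℝ] TensorProduct ℝ g g)
        + TensorProduct.map (LinearMap.id : g →ₗ[ℝ] g)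
          (TensorProduct.map (LieAlgebra.ad ℝ g (P0) : g →ₗ[ℝ] g) (LinearMap.id : g →ₗ[ℝ] g))
        + TensorProduct.map (LinearMap.id : g →ₗ[ℝ] g)
          (TensorProduct.map (LinearMap.id : g →ₗ[ℝ] g) (LieAlgebra.ad ℝ g (P0) : g →ₗ[ℝ] g))) (alt3 J K1 K2) = (-(J ⊗ₜ[ℝ] (P1 ⊗ₜ[ℝ] K2)) + J ⊗ₜ[ℝ] (P2 ⊗ₜ[ℝ] K1) - J ⊗ₜ[ℝ] (K1 ⊗ₜ[ℝ] P2) + J ⊗ₜ[ℝ] (K2 ⊗ₜ[ℝ] P1) + P1 ⊗ₜ[ℝ] (J ⊗ₜ[ℝ] K2) - P1 ⊗ₜ[ℝ] (K2 ⊗ₜ[ℝ] J) - P2 ⊗ₜ[ℝ] (J ⊗ₜ[ℝ] K1) + P2 ⊗ₜ[ℝ] (K1 ⊗ₜ[ℝ] J) + K1 ⊗ₜ[ℝ] (J ⊗ₜ[ℝ] P2) - K1 ⊗ₜ[ℝ] (P2 ⊗ₜ[ℝ] J) - K2 ⊗ₜ[ℝ] (J ⊗ₜ[ℝ] P1) +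 K2 ⊗ₜ[ℝ] (P1 ⊗ₜ[ℝ] J)) := by
      simp only [alt3, map_add, map_sub, map_neg, map_smul, LinearMap.add_apply, LinearMap.sub_apply, LinearMap.neg_apply, LinearMap.smul_apply, hop, hJP1, hJP2, hJK1, hJK2, hJP0, hP1K1, hP2K2, hP1K2, hP2K1, hP0K1, hP0K2, hK1K2, hP0P1, hP0P2, hP1P2, hP1J, hP2J, hK1J, hK2J, hP0J, hK1P1, hK2P2, hK2P1, hK1P2, hK1P0, hK2P0, hK2K1, hP1P0, hP2P0, hP2P1, lie_self, ← smul_tmul', tmul_smul, neg_tmul, tmul_neg, zero_tmul, tmul_zero, smul_zero, smul_neg, neg_zero, add_zero, zero_add, neg_neg]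
      module
    rw [hM] at h0
    have hspan' : ⊤ ≤ Submodule.span ℝ (Set.range ![J, P0, P1, P2, K1, K2]) := hspan.ge
    have hrJ : (Module.Basis.mk hind hspan').repr J = Finsupp.single 0 1 := by
      have h' := (Module.Basis.mk hind hspan').repr_self 0
      rwa [Module.Basis.mk_apply, show ![J, P0, P1, P2, K1, K2] 0 = J from rfl] at h'
    have hrP0 : (Module.Basis.mk hind hspan').repr P0 = Finsupp.single 1 1 := by
      have h' := (Module.Basis.mk hind hspan').repr_self 1
      rwa [Module.Basis.mk_apply, show ![J, P0, P1, P2, K1, K2] 1 = P0 from rfl] at h'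
    have hrP1 : (Module.Basis.mk hind hspan').repr P1 = Finsupp.single 2 1 := by
      have h' := (Module.Basis.mk hind hspan').repr_self 2
      rwa [Module.Basis.mk_apply, show ![J, P0, P1, P2, K1, K2] 2 = P1 from rfl] at h'
    have hrP2 : (Module.Basis.mk hind hspan').repr P2 = Finsupp.single 3 1 := by
      have h' := (Module.Basis.mk hind hspan').repr_self 3
      rwa [Module.Basis.mk_apply, show ![J, P0, P1, P2, K1, K2] 3 = P2 from rfl] at h'
    have hrK1 : (Module.Basis.mk hind hspan').repr K1 = Finsupp.single 4 1 := by
      have h' := (Module.Basis.mk hind hspan').repr_self 4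
      rwa [Module.Basis.mk_apply, show ![J, P0, P1, P2, K1, K2] 4 = K1 from rfl] at h'
    have hrK2 : (Module.Basis.mk hind hspan').repr K2 = Finsupp.single 5 1 := by
      have h' := (Module.Basis.mk hind hspan').repr_self 5
      rwa [Module.Basis.mk_apply, show ![J, P0, P1, P2, K1, K2] 5 = K2 from rfl] at h'
    have e := congrArg (fun t => (((Module.Basis.mk hind hspan').tensorProduct ((Module.Basis.mk hind hspan').tensorProduct (Module.Basis.mk hind hspan'))).repr t)
      ((0 : Fin 6), ((2 : Fin 6), (5 : Fin 6)))) h0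
    simp [Module.Basis.tensorProduct_repr_tmul_apply, hrJ, hrP0, hrP1, hrP2, hrK1, hrK2,
      Finsupp.single_apply] at e
    linarith [e]
  · intro hκ X
    rw [hT, hκ, zero_smul, zero_add, map_smul, hΩ X, smul_zero]
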